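/- Let F be a field of characteristic zero and σ the shift automorphism of F(k). If f ∈ F(k) is shift-reduced, f ≠ 1, and r ∈ F[k] is a polynomial satisfying f·σ(r) − r = 0, then r = 0. -/

import Mathlib

open Polynomial

private lemma aux_zpow_X (F : Type*) [Field F] [CharZero F]
    (τ : Polynomial F ≃ₐ[F] Polynomial F) (hτ : τ X = X + 1) (i : ℤ) :
    (τ ^ i) X = X + C (i : F) := by
  have hC : ∀ a : F, τ (C a) = C a := fun a => by
    simpa [algebraMap_eq] using τ.commutes a
  have hsymm : τ.symm X = X - 1 := by
    apply τ.injective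
    rw [AlgEquiv.apply_symm_apply, map_sub, hτ, map_one]; ring
  have hCs : ∀ a : F, τ.symm (C a) = C a := fun a => by
    simpa [algebraMap_eq] using τ.symm.commutes a
  induction i using Int.induction_on with
  | zero => simp
  | succ n ih =>
    have h1 : (τ ^ ((n : ℤ) + 1)) X = τ ((τ ^ (n : ℤ)) X) := by
      rw [add_comm, zpow_add, zpow_one]; rfl
    rw [h1, ih, map_add, hτ, hC]
    push_cast
    rw [C_add, C_1]; ring
  | pred n ih =>
    have h2 : τ ^ (-(n:ℤ)) = τ ^ ((1:ℤ) + (-(n:ℤ)-1)) := by norm_num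
    have h1 : (τ ^ (-(n : ℤ) - 1)) X = τ.symm ((τ ^ (-(n:ℤ))) X) := by
      rw [h2, zpow_add, zpow_one]
      have : (τ * τ ^ (-(n:ℤ) - 1)) X = τ ((τ ^ (-(n:ℤ)-1)) X) := rfl
      rw [this, AlgEquiv.symm_apply_apply]
    rw [h1, ih, map_add, hsymm, hCs]
    push_cast
    rw [C_sub, C_neg, C_1]; ring

private lemma aux_deg_lc (F : Type*) [Field F]
    (e : Polynomial F ≃ₐ[F] Polynomial F) (c : F) (he : e X = X + C c)
    (s : Polynomial F) :
    (e s).natDegree = s.natDegree ∧ (e s).leadingCoeff = s.leadingCoeff := by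
  have h : (e : Polynomial F →ₐ[F] Polynomial F) = aeval (X + C c) := by
    apply Polynomial.algHom_ext; simp [he]
  have hes : e s = s.comp (X + C c) := by
    have h0 : e s = (e : Polynomial F →ₐ[F] Polynomial F) s := rfl
    rw [h0, h]; rfl
  constructor
  · rw [hes, natDegree_comp, natDegree_X_add_C, mul_one]
  · rw [hes, leadingCoeff_comp (by simp [natDegree_X_add_C])]
    simp [leadingCoeff_X_add_C]

/-- **Lemma.** If `f ∈ F(k)` is shift-reduced, `f ≠ 1`, and a polynomial `r`
satisfies `f·σ(r) − r = 0`, then `r = 0`. -/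
theorem shift_reduced_poly_solution_eq_zero
    (F : Type*) [Field F] [CharZero F]
    (τ : Polynomial F ≃ₐ[F] Polynomial F) (hτ : τ X = X + 1)
    (σ : RatFunc F ≃ₐ[F] RatFunc F)
    (hcompat : ∀ p : Polynomial F,
      σ (algebraMap (Polynomial F) (RatFunc F) p) =
        algebraMap (Polynomial F) (RatFunc F) (τ p))
    (p q : Polynomial F) (hq : q ≠ 0) (hpq : IsCoprime p q)
    (f : RatFunc F)
    (hf : f = algebraMap (Polynomial F) (RatFunc F) p /
              algebraMap (Polynomial F) (RatFunc F) q)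
    (hsr : ∀ i : ℤ, IsCoprime p ((τ ^ i) q))
    (hf1 : f ≠ 1)
    (r : Polynomial F)
    (heq : f * σ (algebraMap (Polynomial F) (RatFunc F) r) -
             algebraMap (Polynomial F) (RatFunc F) r = 0) :
    r = 0 := by
  by_contra hr
  set A := algebraMap (Polynomial F) (RatFunc F) with hA
  have hinj : Function.Injective A := IsFractionRing.injective (Polynomial F) (RatFunc F)
  have hAne : ∀ s : Polynomial F, s ≠ 0 → A s ≠ 0 := by
    intro s hs h0
    exact hs (hinj (by rw [h0, map_zero]))
  -- polynomial form of the equation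
  have key : p * τ r = q * r := by
    have h1 : f * σ (A r) = A r := by
      have := sub_eq_zero.mp heq; exact this
    rw [hf, hcompat] at h1
    have h2 : A p * A (τ r) = A r * A q := by
      rw [div_mul_eq_mul_div, div_eq_iff (hAne q hq)] at h1
      exact h1
    apply hinj
    rw [map_mul, map_mul, h2, mul_comm]
  have hp0 : p ≠ 0 := by
    intro h
    rw [h, zero_mul] at key
    exact hr (by
      rcases mul_eq_zero.mp key.symm with h' | h'
      · exact absurd h' hq
      · exact h')
  -- degree and leading coefficient preservation by all integer powers of τ
  have hdeg : ∀ (i : ℤ) (s : Polynomial F), ((τ ^ i) s).natDegree = s.natDegree :=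
    fun i s => (aux_deg_lc F (τ ^ i) (i : F) (aux_zpow_X F τ hτ i) s).1
  have hlc : ∀ (i : ℤ) (s : Polynomial F), ((τ ^ i) s).leadingCoeff = s.leadingCoeff :=
    fun i s => (aux_deg_lc F (τ ^ i) (i : F) (aux_zpow_X F τ hτ i) s).2
  have hone : ∀ s : Polynomial F, (τ ^ (1:ℤ)) s = τ s := fun s => by rw [zpow_one]
  have hdeg1 : ∀ s : Polynomial F, (τ s).natDegree = s.natDegree := fun s => by
    rw [← hone]; exact hdeg 1 s
  have hlc1 : ∀ s : Polynomial F, (τ s).leadingCoeff = s.leadingCoeff := fun s => by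
    rw [← hone]; exact hlc 1 s
  have hne : ∀ (i : ℤ) (s : Polynomial F), s ≠ 0 → (τ ^ i) s ≠ 0 := by
    intro i s hs h0
    exact hs ((τ ^ i).injective (by rw [h0, map_zero]))
  have hne1 : ∀ s : Polynomial F, s ≠ 0 → τ s ≠ 0 := fun s hs => by
    rw [← hone]; exact hne 1 s hs
  -- coprimality facts
  have hc1 : ∀ n : ℕ, IsCoprime ((τ ^ (n:ℤ)) p) q := by
    intro n
    have h := (hsr (-(n:ℤ))).map ((τ ^ (n:ℤ)) : Polynomial F ≃ₐ[F] Polynomial F).toAlgHom.toRingHom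
    have h3 : IsCoprime ((τ ^ (n:ℤ)) p) ((τ ^ (n:ℤ)) ((τ ^ (-(n:ℤ))) q)) := by simpa using h
    have h2 : (τ ^ (n:ℤ)) ((τ ^ (-(n:ℤ))) q) = q := by
      have h4 : (τ ^ (n:ℤ)) ((τ ^ (-(n:ℤ))) q) = ((τ ^ (n:ℤ)) * (τ ^ (-(n:ℤ)))) q := rfl
      rw [h4, ← zpow_add]
      norm_num
    rwa [h2] at h3
  -- descent on the p side
  have S : ∀ n : ℕ, ∃ s : Polynomial F, s ≠ 0 ∧
      r.natDegree = n * p.natDegree + s.natDegree ∧ ((τ ^ (n:ℤ)) p) * τ s = q * s := by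
    intro n
    induction n with
    | zero => exact ⟨r, hr, by simp, by simpa using key⟩
    | succ n ih =>
      obtain ⟨s, hs0, hdg, he⟩ := ih
      have hdvd : (τ ^ (n:ℤ)) p ∣ s := by
        have : (τ ^ (n:ℤ)) p ∣ q * s := ⟨τ s, he.symm⟩
        exact (hc1 n).dvd_of_dvd_mul_left this
      obtain ⟨s', hs'⟩ := hdvd
      have hpn : (τ ^ (n:ℤ)) p ≠ 0 := hne _ _ hp0
      have hs'0 : s' ≠ 0 := by
        intro h0; rw [h0, mul_zero] at hs'; exact hs0 hs'
      refine ⟨s', hs'0, ?_, ?_⟩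
      · have : s.natDegree = p.natDegree + s'.natDegree := by
          rw [hs', natDegree_mul hpn hs'0, hdeg]
        rw [hdg, this]; ring
      · have hstep : τ ((τ ^ (n:ℤ)) p) = (τ ^ ((n:ℤ)+1)) p := by
          rw [add_comm, zpow_add, zpow_one]; rfl
        have he2 : (τ ^ (n:ℤ)) p * ((τ ^ ((n:ℤ)+1)) p * τ s') = (τ ^ (n:ℤ)) p * (q * s') := by
          have := he
          rw [hs', map_mul, hstep] at this
          rw [this]; ring
        have := mul_left_cancel₀ hpn he2
        have hcast : ((n+1 : ℕ) : ℤ) = (n:ℤ) + 1 := by push_cast; ring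
        rw [hcast]; exact this
  -- descent on the q side
  have T : ∀ n : ℕ, ∃ s : Polynomial F, s ≠ 0 ∧
      r.natDegree = n * q.natDegree + s.natDegree ∧ p * τ s = ((τ ^ (-(n:ℤ))) q) * s := by
    intro n
    induction n with
    | zero => exact ⟨r, hr, by simp, by simpa using key⟩
    | succ n ih =>
      obtain ⟨s, hs0, hdg, he⟩ := ih
      have hqn : (τ ^ (-(n:ℤ))) q ≠ 0 := hne _ _ hq
      have hdvd : (τ ^ (-(n:ℤ))) q ∣ τ s := by
        have : (τ ^ (-(n:ℤ))) q ∣ p * τ s := ⟨s, he⟩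
        exact (hsr (-(n:ℤ))).symm.dvd_of_dvd_mul_left this
      obtain ⟨w, hw⟩ := hdvd
      set s' := τ.symm w with hs'def
      have hws : τ s' = w := τ.apply_symm_apply w
      -- s = (τ^{-(n+1)}) q * s'
      have hsplit : s = (τ ^ (-(n:ℤ) - 1)) q * s' := by
        apply τ.injective
        rw [map_mul, hws, hw]
        congr 1
        have : τ ((τ ^ (-(n:ℤ) - 1)) q) = (τ ^ ((-(n:ℤ) - 1) + 1)) q := by
          rw [add_comm, zpow_add, zpow_one]; rfl
        rw [this]; norm_num
      have hqn1 : (τ ^ (-(n:ℤ) - 1)) q ≠ 0 := hne _ _ hq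
      have hs'0 : s' ≠ 0 := by
        intro h0; rw [hsplit, h0, mul_zero] at hs0; exact hs0 rfl
      refine ⟨s', hs'0, ?_, ?_⟩
      · have : s.natDegree = q.natDegree + s'.natDegree := by
          rw [hsplit, natDegree_mul hqn1 hs'0, hdeg]
        rw [hdg, this]; ring
      · have he2 : (τ ^ (-(n:ℤ))) q * (p * τ s') = (τ ^ (-(n:ℤ))) q * ((τ ^ (-(n:ℤ) - 1)) q * s') := by
          have := he
          rw [hw, ← hws, hsplit] at this
          calc (τ ^ (-(n:ℤ))) q * (p * τ s') = p * ((τ ^ (-(n:ℤ))) q * τ s') := by ring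
          _ = (τ ^ (-(n:ℤ))) q * ((τ ^ (-(n:ℤ) - 1)) q * s') := by rw [this]
        have h3 := mul_left_cancel₀ hqn he2
        have hcast : (-(↑(n+1):ℤ)) = -(n:ℤ) - 1 := by push_cast; ring
        rw [hcast]; exact h3
  -- both degrees are zero
  have hdp : p.natDegree = 0 := by
    by_contra h
    obtain ⟨s, _, hdg, _⟩ := S (r.natDegree + 1)
    have h1 : r.natDegree + 1 ≤ (r.natDegree + 1) * p.natDegree :=
      Nat.le_mul_of_pos_right _ (Nat.pos_of_ne_zero h)
    omega
  have hdq : q.natDegree = 0 := by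
    by_contra h
    obtain ⟨s, _, hdg, _⟩ := T (r.natDegree + 1)
    have h1 : r.natDegree + 1 ≤ (r.natDegree + 1) * q.natDegree :=
      Nat.le_mul_of_pos_right _ (Nat.pos_of_ne_zero h)
    omega
  -- p and q are equal constants, so f = 1
  have hpeq : p = q := by
    have h1 : (p * τ r).leadingCoeff = (q * r).leadingCoeff := by rw [key]
    rw [leadingCoeff_mul, leadingCoeff_mul, hlc1] at h1
    have hrlc : r.leadingCoeff ≠ 0 := leadingCoeff_ne_zero.mpr hr
    have h2 : p.leadingCoeff = q.leadingCoeff := mul_right_cancel₀ hrlc h1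
    rw [eq_C_of_natDegree_eq_zero hdp, eq_C_of_natDegree_eq_zero hdq]
    rw [leadingCoeff, leadingCoeff, hdp, hdq] at h2
    rw [h2]
  apply hf1
  rw [hf, hpeq, div_self (hAne q hq)]
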